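/- Let A and B be matrices in M_n(ℂ) and let ‖·‖ be a norm on M_n(ℂ). Then for every ε > 0 there exists a pair of invertible matrices A_ε, B_ε ∈ GL_n(ℂ), each with a simple spectrum, such that ‖A − A_ε‖ < ε, ‖B − B_ε‖ < ε, and the product matrix A_ε B_ε⁻¹ has a simple spectrum. -/

import Mathlib

open Matrix

open Polynomial in
/-- If a monic polynomial over `ℂ[T]` has a separable specialization at some `t₁ : ℂ`, then
there is a nonzero polynomial `d` such that the specialization at any `t` with `d.eval t ≠ 0`
is separable. -/
private lemma sep_specialize {P : Polynomial (Polynomial ℂ)} (hP : P.Monic)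
    {t₁ : ℂ} (h1 : (P.map (Polynomial.evalRingHom t₁)).Separable) :
    ∃ d : Polynomial ℂ, d ≠ 0 ∧
      ∀ t : ℂ, d.eval t ≠ 0 → (P.map (Polynomial.evalRingHom t)).Separable := by
  classical
  set F := RatFunc ℂ
  set φ : Polynomial ℂ →+* F := algebraMap (Polynomial ℂ) F with hφdef
  have hφinj : Function.Injective φ := IsFractionRing.injective _ _
  have hmapinj : Function.Injective (Polynomial.map φ) := Polynomial.map_injective φ hφinj
  set Pf : Polynomial F := P.map φ with hPfdef
  have hPfm : Pf.Monic := hP.map φ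
  -- Step A: coprimality of `Pf` and its derivative over the fraction field
  have hco : IsCoprime Pf (derivative Pf) := by
    by_contra hnc
    rw [← EuclideanDomain.gcd_isUnit_iff] at hnc
    have hg0 : EuclideanDomain.gcd Pf (derivative Pf) ≠ 0 := by
      intro h
      exact hPfm.ne_zero (EuclideanDomain.gcd_eq_zero_iff.mp h).1
    obtain ⟨π, hπirr, hπdvd⟩ := WfDvdMonoid.exists_irreducible_factor hnc hg0
    have hπP : π ∣ Pf := hπdvd.trans (EuclideanDomain.gcd_dvd_left _ _)
    have hπP' : π ∣ derivative Pf := hπdvd.trans (EuclideanDomain.gcd_dvd_right _ _)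
    have hπ0 : π ≠ 0 := hπirr.ne_zero
    have hu : IsUnit (Polynomial.C π.leadingCoeff⁻¹) :=
      Polynomial.isUnit_C.mpr (inv_ne_zero (leadingCoeff_ne_zero.mpr hπ0)).isUnit
    set π' := π * Polynomial.C π.leadingCoeff⁻¹ with hπ'def
    have hπ'm : π'.Monic := Polynomial.monic_mul_leadingCoeff_inv hπ0
    have hππ' : Associated π π' := ⟨hu.unit, by rw [IsUnit.unit_spec]⟩
    have hπ'irr : Irreducible π' := hππ'.irreducible hπirr
    have hπ'P : π' ∣ Pf := hππ'.symm.dvd.trans hπP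
    have hπ'P' : π' ∣ derivative Pf := hππ'.symm.dvd.trans hπP'
    -- lift π' to a monic polynomial over ℂ[T]
    obtain ⟨g₀, hg₀⟩ := IsIntegrallyClosed.eq_map_mul_C_of_dvd (K := F) hP hπ'P
    rw [hπ'm.leadingCoeff, Polynomial.C_1, mul_one] at hg₀
    have hg₀m : g₀.Monic := by
      have h1 : φ g₀.leadingCoeff = 1 := by
        rw [← Polynomial.leadingCoeff_map_of_injective hφinj g₀, hg₀, hπ'm.leadingCoeff]
      have : φ g₀.leadingCoeff = φ 1 := by rw [h1, _root_.map_one]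
      exact hφinj this
    have hg₀irr : Irreducible g₀ := by
      rw [Polynomial.Monic.irreducible_iff_irreducible_map_fraction_map hg₀m (K := F), hg₀]
      exact hπ'irr
    have hg₀prime : Prime g₀ := UniqueFactorizationMonoid.irreducible_iff_prime.mp hg₀irr
    have hg₀P : g₀ ∣ P :=
      hP.dvd_of_fraction_map_dvd_fraction_map hg₀m (by rw [hg₀]; exact hπ'P)
    have hg₀nd : g₀.natDegree ≠ 0 := by
      intro h0
      have hone : g₀ = 1 := hg₀m.natDegree_eq_zero.mp h0
      rw [hone, Polynomial.map_one] at hg₀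
      exact hπ'irr.not_isUnit (hg₀ ▸ isUnit_one)
    -- divisibility of the derivative, clearing denominators
    have hg₀P' : g₀ ∣ derivative P := by
      obtain ⟨r, hr⟩ : π' ∣ (derivative P).map φ := by
        rw [← Polynomial.derivative_map]; exact hπ'P'
      obtain ⟨s, hs⟩ :=
        IsLocalization.integerNormalization_map_to_map (nonZeroDivisors (Polynomial ℂ)) r
      have hs0 : (s : Polynomial ℂ) ≠ 0 := nonZeroDivisors.coe_ne_zero s
      have key : derivative P * Polynomial.C (s : Polynomial ℂ) =
          g₀ * IsLocalization.integerNormalization (nonZeroDivisors (Polynomial ℂ)) r := by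
        apply hmapinj
        rw [Polynomial.map_mul, Polynomial.map_mul, Polynomial.map_C, hs, hg₀, hr,
          Algebra.smul_def, Polynomial.algebraMap_apply]
        ring
      have hdvd : g₀ ∣ derivative P * Polynomial.C (s : Polynomial ℂ) := Dvd.intro _ key.symm
      rcases hg₀prime.2.2 _ _ hdvd with h | h
      · exact h
      · exfalso
        have hCs : Polynomial.C (s : Polynomial ℂ) ≠ 0 := by
          simpa using hs0
        have hdeg := Polynomial.natDegree_le_of_dvd h hCs
        rw [Polynomial.natDegree_C] at hdeg
        exact hg₀nd (Nat.le_zero.mp hdeg)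
    -- specialize at t₁
    have hdvd1 : g₀.map (Polynomial.evalRingHom t₁) ∣ P.map (Polynomial.evalRingHom t₁) :=
      Polynomial.map_dvd _ hg₀P
    have hdvd2 : g₀.map (Polynomial.evalRingHom t₁) ∣
        derivative (P.map (Polynomial.evalRingHom t₁)) := by
      rw [Polynomial.derivative_map]; exact Polynomial.map_dvd _ hg₀P'
    have hunit : IsUnit (g₀.map (Polynomial.evalRingHom t₁)) :=
      IsCoprime.isUnit_of_dvd' h1 hdvd1 hdvd2
    have hnd := Polynomial.natDegree_eq_zero_of_isUnit hunit
    rw [hg₀m.natDegree_map] at hnd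
    exact hg₀nd hnd
  -- Step B: Bezout identity and clearing denominators
  obtain ⟨a, b, hab⟩ := hco
  obtain ⟨ca, hca⟩ :=
    IsLocalization.integerNormalization_map_to_map (nonZeroDivisors (Polynomial ℂ)) a
  obtain ⟨cb, hcb⟩ :=
    IsLocalization.integerNormalization_map_to_map (nonZeroDivisors (Polynomial ℂ)) b
  set A₀ := IsLocalization.integerNormalization (nonZeroDivisors (Polynomial ℂ)) a with hA₀
  set B₀ := IsLocalization.integerNormalization (nonZeroDivisors (Polynomial ℂ)) b with hB₀
  refine ⟨(ca : Polynomial ℂ) * (cb : Polynomial ℂ),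
    mul_ne_zero (nonZeroDivisors.coe_ne_zero ca) (nonZeroDivisors.coe_ne_zero cb), ?_⟩
  have key : A₀ * Polynomial.C (cb : Polynomial ℂ) * P +
      B₀ * Polynomial.C (ca : Polynomial ℂ) * derivative P =
      Polynomial.C ((ca : Polynomial ℂ) * (cb : Polynomial ℂ)) := by
    apply hmapinj
    rw [Polynomial.map_add, Polynomial.map_mul, Polynomial.map_mul, Polynomial.map_mul,
      Polynomial.map_mul, Polynomial.map_C, Polynomial.map_C, Polynomial.map_C, hca, hcb,
      Algebra.smul_def, Algebra.smul_def, Polynomial.algebraMap_apply, Polynomial.algebraMap_apply,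
      ← Polynomial.derivative_map, _root_.map_mul φ, Polynomial.C_mul]
    linear_combination (Polynomial.C (φ (ca : Polynomial ℂ)) *
      Polynomial.C (φ (cb : Polynomial ℂ))) * hab
  intro t ht
  have keyt := congrArg (Polynomial.map (Polynomial.evalRingHom t)) key
  simp only [Polynomial.map_add, Polynomial.map_mul, Polynomial.map_C] at keyt
  rw [← Polynomial.derivative_map] at keyt
  have hval : Polynomial.C ((Polynomial.evalRingHom t)
        ((ca : Polynomial ℂ) * (cb : Polynomial ℂ)))⁻¹ *
      Polynomial.C ((Polynomial.evalRingHom t)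
        ((ca : Polynomial ℂ) * (cb : Polynomial ℂ))) = 1 := by
    rw [← Polynomial.C_mul, inv_mul_cancel₀ (by simpa using ht), Polynomial.C_1]
  rw [Polynomial.separable_def]
  refine ⟨Polynomial.C ((Polynomial.evalRingHom t)
        ((ca : Polynomial ℂ) * (cb : Polynomial ℂ)))⁻¹ *
      (A₀.map (Polynomial.evalRingHom t) *
        Polynomial.C ((Polynomial.evalRingHom t) (cb : Polynomial ℂ))),
    Polynomial.C ((Polynomial.evalRingHom t)
        ((ca : Polynomial ℂ) * (cb : Polynomial ℂ)))⁻¹ *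
      (B₀.map (Polynomial.evalRingHom t) *
        Polynomial.C ((Polynomial.evalRingHom t) (ca : Polynomial ℂ))), ?_⟩
  linear_combination (Polynomial.C ((Polynomial.evalRingHom t)
      ((ca : Polynomial ℂ) * (cb : Polynomial ℂ)))⁻¹) * keyt + hval

open Polynomial in
private lemma line_map {n : ℕ} (M N : Matrix (Fin n) (Fin n) ℂ) (t : ℂ) :
    (Matrix.of fun i j => Polynomial.C (M i j) + Polynomial.X * Polynomial.C (N i j)).map
      (Polynomial.evalRingHom t) = M + t • N := by
  ext i j
  simp only [Matrix.map_apply, Matrix.of_apply, Polynomial.coe_evalRingHom, Polynomial.eval_add,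
    Polynomial.eval_mul, Polynomial.eval_X, Polynomial.eval_C, Matrix.add_apply,
    Matrix.smul_apply, smul_eq_mul]

open Polynomial in
/-- Genericity along an affine line of matrices: if separability of the charpoly holds at
some parameter `t₁` and invertibility at some `t₂`, then there is a nonzero polynomial `d`
such that both hold at every `t` with `d.eval t ≠ 0`. -/
private lemma family_good {n : ℕ} (M N : Matrix (Fin n) (Fin n) ℂ) {t₁ t₂ : ℂ}
    (h1 : (M + t₁ • N).charpoly.Separable)
    (h2 : (M + t₂ • N).det ≠ 0) :
    ∃ d : Polynomial ℂ, d ≠ 0 ∧ ∀ t : ℂ, d.eval t ≠ 0 →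
      (M + t • N).charpoly.Separable ∧ (M + t • N).det ≠ 0 := by
  set Mp := Matrix.of fun i j => Polynomial.C (M i j) + Polynomial.X * Polynomial.C (N i j)
    with hMp
  have hch : ∀ t : ℂ, (M + t • N).charpoly = Mp.charpoly.map (Polynomial.evalRingHom t) := by
    intro t
    rw [← line_map M N t, Matrix.charpoly_map]
  have hdet : ∀ t : ℂ, (M + t • N).det = Polynomial.eval t Mp.det := by
    intro t
    rw [← line_map M N t, ← RingHom.mapMatrix_apply, ← RingHom.map_det]
    rfl
  obtain ⟨d₁, hd₁0, hd₁⟩ := sep_specialize (Matrix.charpoly_monic Mp)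
    (t₁ := t₁) (by rw [← hch t₁]; exact h1)
  have hD0 : Mp.det ≠ 0 := by
    intro h
    exact h2 (by rw [hdet t₂, h, Polynomial.eval_zero])
  refine ⟨d₁ * Mp.det, mul_ne_zero hd₁0 hD0, fun t ht => ?_⟩
  rw [Polynomial.eval_mul, mul_ne_zero_iff] at ht
  exact ⟨by rw [hch t]; exact hd₁ t ht.1, by rw [hdet t]; exact ht.2⟩

private lemma exists_small (d : Polynomial ℂ) (hd : d ≠ 0) {δ : ℝ} (hδ : 0 < δ) :
    ∃ t : ℂ, ‖t‖ < δ ∧ d.eval t ≠ 0 := by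
  classical
  have hmem : ∃ k : ℕ, ((δ / (k + 2) : ℝ) : ℂ) ∉ d.roots.toFinset := by
    by_contra h
    push_neg at h
    have := Finite.exists_ne_map_eq_of_infinite
      (fun k : ℕ => (⟨_, h k⟩ : {x // x ∈ d.roots.toFinset}))
    obtain ⟨k, l, hkl, hf⟩ := this
    apply hkl
    have h1 : ((δ / (k + 2) : ℝ) : ℂ) = ((δ / (l + 2) : ℝ) : ℂ) := congrArg Subtype.val hf
    have h2 : (δ / (k + 2) : ℝ) = (δ / (l + 2) : ℝ) := by exact_mod_cast h1
    have hk2 : ((k : ℝ) + 2) ≠ 0 := by positivity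
    have hl2 : ((l : ℝ) + 2) ≠ 0 := by positivity
    rw [div_eq_div_iff hk2 hl2] at h2
    have hδ' : δ ≠ 0 := ne_of_gt hδ
    have h3 := mul_left_cancel₀ hδ' h2
    have : (k : ℝ) = (l : ℝ) := by linarith
    exact_mod_cast this
  obtain ⟨k, hk⟩ := hmem
  refine ⟨((δ / (k + 2) : ℝ) : ℂ), ?_, ?_⟩
  · rw [Complex.norm_real]
    have hpos : (0 : ℝ) < δ / (k + 2) := by positivity
    rw [Real.norm_eq_abs, abs_of_pos hpos]
    have hk0 : (0 : ℝ) ≤ (k : ℝ) := Nat.cast_nonneg k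
    have : (1 : ℝ) < (k : ℝ) + 2 := by linarith
    exact div_lt_self hδ this
  · intro h0
    exact hk (Multiset.mem_toFinset.mpr ((Polynomial.mem_roots hd).mpr h0))

open Polynomial in
private lemma diag_sep {n : ℕ} (v : Fin n → ℂ) (hv : Function.Injective v) :
    (Matrix.diagonal v).charpoly.Separable := by
  rw [Matrix.charpoly_of_upperTriangular _ (Matrix.blockTriangular_diagonal v)]
  simp only [Matrix.diagonal_apply_eq]
  exact Polynomial.separable_prod_X_sub_C_iff.mpr hv

/-- Let `A, B ∈ M_n(ℂ)` and let `‖·‖` be a norm on `M_n(ℂ)` (modelled as a `Seminorm` over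
`ℂ` which vanishes only at `0`). Then for every `ε > 0` there exist invertible matrices
`A_ε, B_ε ∈ GL_n(ℂ)`, each with simple spectrum (pairwise distinct eigenvalues, i.e. the
roots of the characteristic polynomial form a multiset with no duplicates), such that
`‖A − A_ε‖ < ε`, `‖B − B_ε‖ < ε`, and the product `A_ε B_ε⁻¹` has a simple spectrum. -/
theorem exists_simple_spectrum_approx_pair
    {n : ℕ} (hn : 0 < n)
    (A B : Matrix (Fin n) (Fin n) ℂ)
    (nrm : Seminorm ℂ (Matrix (Fin n) (Fin n) ℂ))
    (hnrm : ∀ X, nrm X = 0 → X = 0)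
    (ε : ℝ) (hε : 0 < ε) :
    ∃ (Aε Bε : GL (Fin n) ℂ),
      nrm (A - (Aε : Matrix (Fin n) (Fin n) ℂ)) < ε ∧
      nrm (B - (Bε : Matrix (Fin n) (Fin n) ℂ)) < ε ∧
      ((Aε : Matrix (Fin n) (Fin n) ℂ)).charpoly.roots.Nodup ∧
      ((Bε : Matrix (Fin n) (Fin n) ℂ)).charpoly.roots.Nodup ∧
      ((Aε * Bε⁻¹ : GL (Fin n) ℂ) : Matrix (Fin n) (Fin n) ℂ).charpoly.roots.Nodup := by
  classical
  -- a diagonal matrix with distinct nonzero entries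
  set v : Fin n → ℂ := fun i => ((i : ℕ) : ℂ) + 1 with hv_def
  have hv : Function.Injective v := by
    intro i j h
    have h' : ((i : ℕ) : ℂ) + 1 = ((j : ℕ) : ℂ) + 1 := h
    have : (i : ℕ) = (j : ℕ) := by exact_mod_cast add_right_cancel h'
    exact Fin.ext this
  have hvne : ∀ i, v i ≠ 0 := by
    intro i
    have : (((i : ℕ) + 1 : ℕ) : ℂ) ≠ 0 := by
      exact_mod_cast Nat.succ_ne_zero (i : ℕ)
    simpa [hv_def] using this
  set D := Matrix.diagonal v with hD_def
  have hDsep : D.charpoly.Separable := diag_sep v hv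
  have hDdet : D.det ≠ 0 := by
    rw [hD_def, Matrix.det_diagonal]
    exact Finset.prod_ne_zero_iff.mpr fun i _ => hvne i
  have honeB : B + (1 : ℂ) • (D - B) = D := by rw [one_smul]; abel
  -- choose Bε
  obtain ⟨dB, hdB0, hdB⟩ := family_good B (D - B) (t₁ := 1) (t₂ := 1)
    (by rw [honeB]; exact hDsep) (by rw [honeB]; exact hDdet)
  have hδB : (0 : ℝ) < ε / (nrm (D - B) + 1) := by
    apply div_pos hε
    have := apply_nonneg nrm (D - B)
    linarith
  obtain ⟨s, hsmall, hs⟩ := exists_small dB hdB0 hδB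
  obtain ⟨hBsep, hBdet⟩ := hdB s hs
  set Bm := B + s • (D - B) with hBm_def
  have hBunit : IsUnit Bm := (Matrix.isUnit_iff_isUnit_det _).mpr (isUnit_iff_ne_zero.mpr hBdet)
  have hBidet : IsUnit Bm.det := isUnit_iff_ne_zero.mpr hBdet
  set Bε : GL (Fin n) ℂ := hBunit.unit with hBε_def
  have hBεcoe : (Bε : Matrix (Fin n) (Fin n) ℂ) = Bm := hBunit.unit_spec
  have hBinvcoe : ((Bε⁻¹ : GL (Fin n) ℂ) : Matrix (Fin n) (Fin n) ℂ) = Bm⁻¹ := by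
    rw [Matrix.coe_units_inv, hBεcoe]
  have hBmidet : Bm⁻¹.det ≠ 0 := by
    rw [Matrix.det_nonsing_inv, Ring.inverse_eq_inv]
    exact inv_ne_zero hBdet
  -- choose the witness A₁
  have hzero1 : D + (0 : ℂ) • (D * Bm - D) = D := by rw [zero_smul, add_zero]
  obtain ⟨e₁, he₁0, he₁⟩ := family_good D (D * Bm - D) (t₁ := 0) (t₂ := 0)
    (by rw [hzero1]; exact hDsep) (by rw [hzero1]; exact hDdet)
  have hfam2 : ∀ s' : ℂ, (D + s' • (D * Bm - D)) * Bm⁻¹ = D * Bm⁻¹ + s' • (D - D * Bm⁻¹) := by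
    intro s'
    rw [Matrix.add_mul, Matrix.smul_mul, Matrix.sub_mul,
      Matrix.mul_nonsing_inv_cancel_right _ _ hBidet]
  have hone2 : D * Bm⁻¹ + (1 : ℂ) • (D - D * Bm⁻¹) = D := by rw [one_smul]; abel
  have hzero2 : D * Bm⁻¹ + (0 : ℂ) • (D - D * Bm⁻¹) = D * Bm⁻¹ := by
    rw [zero_smul, add_zero]
  obtain ⟨e₂, he₂0, he₂⟩ := family_good (D * Bm⁻¹) (D - D * Bm⁻¹) (t₁ := 1) (t₂ := 0)
    (by rw [hone2]; exact hDsep)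
    (by rw [hzero2, Matrix.det_mul]; exact mul_ne_zero hDdet hBmidet)
  obtain ⟨s', -, hs'⟩ := exists_small (e₁ * e₂) (mul_ne_zero he₁0 he₂0) one_pos
  rw [Polynomial.eval_mul, mul_ne_zero_iff] at hs'
  set A₁ := D + s' • (D * Bm - D) with hA₁_def
  obtain ⟨hA₁sep, hA₁det⟩ := he₁ s' hs'.1
  have hA₁prod : (A₁ * Bm⁻¹).charpoly.Separable := by
    rw [hA₁_def, hfam2 s']
    exact (he₂ s' hs'.2).1
  have hA₁proddet : (A₁ * Bm⁻¹).det ≠ 0 := by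
    rw [Matrix.det_mul]
    exact mul_ne_zero hA₁det hBmidet
  -- choose Aε
  have honeA : A + (1 : ℂ) • (A₁ - A) = A₁ := by rw [one_smul]; abel
  obtain ⟨f₁, hf₁0, hf₁⟩ := family_good A (A₁ - A) (t₁ := 1) (t₂ := 1)
    (by rw [honeA]; exact hA₁sep) (by rw [honeA]; exact hA₁det)
  have hfam3 : ∀ t : ℂ, (A + t • (A₁ - A)) * Bm⁻¹ = A * Bm⁻¹ + t • ((A₁ - A) * Bm⁻¹) := by
    intro t
    rw [Matrix.add_mul, Matrix.smul_mul]
  obtain ⟨f₂, hf₂0, hf₂⟩ := family_good (A * Bm⁻¹) ((A₁ - A) * Bm⁻¹) (t₁ := 1) (t₂ := 1)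
    (by rw [← hfam3 1, honeA]; exact hA₁prod)
    (by rw [← hfam3 1, honeA]; exact hA₁proddet)
  have hδA : (0 : ℝ) < ε / (nrm (A₁ - A) + 1) := by
    apply div_pos hε
    have := apply_nonneg nrm (A₁ - A)
    linarith
  obtain ⟨t, htsmall, ht⟩ := exists_small (f₁ * f₂) (mul_ne_zero hf₁0 hf₂0) hδA
  rw [Polynomial.eval_mul, mul_ne_zero_iff] at ht
  set Am := A + t • (A₁ - A) with hAm_def
  obtain ⟨hAsep, hAdet⟩ := hf₁ t ht.1
  have hAprodsep : (Am * Bm⁻¹).charpoly.Separable := by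
    rw [hAm_def, hfam3 t]
    exact (hf₂ t ht.2).1
  have hAunit : IsUnit Am := (Matrix.isUnit_iff_isUnit_det _).mpr (isUnit_iff_ne_zero.mpr hAdet)
  set Aε : GL (Fin n) ℂ := hAunit.unit with hAε_def
  have hAεcoe : (Aε : Matrix (Fin n) (Fin n) ℂ) = Am := hAunit.unit_spec
  refine ⟨Aε, Bε, ?_, ?_, ?_, ?_, ?_⟩
  · -- norm bound for A
    rw [hAεcoe]
    have hdiff : A - Am = -(t • (A₁ - A)) := by rw [hAm_def]; abel
    rw [hdiff, map_neg_eq_map, map_smul_eq_mul]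
    have hc := apply_nonneg nrm (A₁ - A)
    calc ‖t‖ * nrm (A₁ - A) ≤ ‖t‖ * (nrm (A₁ - A) + 1) := by
          apply mul_le_mul_of_nonneg_left (by linarith) (norm_nonneg t)
      _ < ε := by
          rw [← lt_div_iff₀ (by linarith : (0:ℝ) < nrm (A₁ - A) + 1)] at *
          exact htsmall
  · -- norm bound for B
    rw [hBεcoe]
    have hdiff : B - Bm = -(s • (D - B)) := by rw [hBm_def]; abel
    rw [hdiff, map_neg_eq_map, map_smul_eq_mul]
    have hc := apply_nonneg nrm (D - B)
    calc ‖s‖ * nrm (D - B) ≤ ‖s‖ * (nrm (D - B) + 1) := by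
          apply mul_le_mul_of_nonneg_left (by linarith) (norm_nonneg s)
      _ < ε := by
          rw [← lt_div_iff₀ (by linarith : (0:ℝ) < nrm (D - B) + 1)] at *
          exact hsmall
  · rw [hAεcoe]
    exact Polynomial.nodup_roots hAsep
  · rw [hBεcoe]
    exact Polynomial.nodup_roots hBsep
  · have hcoe : ((Aε * Bε⁻¹ : GL (Fin n) ℂ) : Matrix (Fin n) (Fin n) ℂ) = Am * Bm⁻¹ := by
      rw [Units.val_mul, hAεcoe, hBinvcoe]
    rw [hcoe]
    exact Polynomial.nodup_roots hAprodsep
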